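/- Let G be a connected planar directed graph with incidence matrix A, coherently oriented face matrix B, edge partition E = C ∪ I, and connection matrix M_{fv} = (1/2)Σ_{e∈C} B_{fe}A_{ev} - (1/2)Σ_{e∈I} B_{fe}A_{ev}. A vector φ ∈ R^V (modulo the all-ones vector) satisfies Mφ = 0 if and only if φ is a linear combination of indicator vectors of vertex sets whose induced edge-cuts consist entirely of edges in C or entirely of edges in I. -/

import Mathlib

open Matrix Relation

/-- For a connected planar circuit with `ker B = im A`, diagonal
involution `P` (`+1` on capacitive edges `C`, `-1` on inductive edges) and
connection matrix `M = (1/2) B P A`, a vector `φ ∈ ℝ^V` satisfies `M φ = 0` iff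
`φ` is a linear combination of indicator vectors of vertex subsets whose
induced edge-cut is homogeneous (entirely in `C` or entirely in its
complement).  (The all-ones vector is the indicator of `S = V`, whose cut is
empty and hence homogeneous.) -/
lemma aux9 {E V : Type*} [Fintype E] [Fintype V] [DecidableEq V]
    (src tgt : E → V) (p : E → Prop) (g : V → ℝ)
    (hg : ∀ e, ¬ p e → g (src e) = g (tgt e)) :
    g ∈ Submodule.span ℝ {x : V → ℝ | ∃ S : Finset V,
      (∀ e : E, ¬(src e ∈ S ↔ tgt e ∈ S) → p e) ∧
      x = fun v => if v ∈ S then (1 : ℝ) else 0} := by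
  classical
  set rel : V → V → Prop := fun a b => ∃ e, ¬ p e ∧
    ((src e = a ∧ tgt e = b) ∨ (src e = b ∧ tgt e = a)) with hrel
  have hsymm : Symmetric rel := by
    rintro a b ⟨e, hpe, h | h⟩
    exacts [⟨e, hpe, Or.inr h⟩, ⟨e, hpe, Or.inl h⟩]
  set R : V → V → Prop := ReflTransGen rel with hR
  have hRsymm : ∀ {a b}, R a b → R b a := fun h => by
    haveI : Std.Symm rel := ⟨fun _ _ h' => hsymm h'⟩
    exact Std.Symm.symm (r := ReflTransGen rel) _ _ h
  have hgR : ∀ {a b}, R a b → g a = g b := by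
    intro a b h
    induction h with
    | refl => rfl
    | tail _ hstep ih =>
      rcases hstep with ⟨e, hpe, ⟨h1, h2⟩ | ⟨h1, h2⟩⟩
      · rw [ih, ← h1, ← h2]; exact hg e hpe
      · rw [ih, ← h1, ← h2]; exact (hg e hpe).symm
  set S : V → Finset V := fun v => Finset.univ.filter (fun w => R v w) with hS
  have hmem : ∀ v w, w ∈ S v ↔ R v w := by intro v w; simp [hS]
  have hScongr : ∀ {v w}, R v w → S v = S w := by
    intro v w h
    ext u
    simp only [hmem]
    exact ⟨fun h2 => (hRsymm h).trans h2, fun h2 => h.trans h2⟩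
  have hcardpos : ∀ v, 0 < (S v).card := fun v =>
    Finset.card_pos.2 ⟨v, (hmem v v).2 ReflTransGen.refl⟩
  have hgeq : g = ∑ v : V, (g v / (S v).card) •
      (fun w => if w ∈ S v then (1:ℝ) else 0) := by
    funext w
    have hswap : ∀ v, w ∈ S v ↔ v ∈ S w := fun v =>
      ⟨fun h => (hmem w v).2 (hRsymm ((hmem v w).1 h)),
       fun h => (hmem v w).2 (hRsymm ((hmem w v).1 h))⟩
    simp only [Finset.sum_apply, Pi.smul_apply, smul_eq_mul, mul_ite, mul_one, mul_zero]
    have h1 : ∀ v : V, (if w ∈ S v then g v / (S v).card else 0)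
        = (if v ∈ S w then g w / (S w).card else 0) := by
      intro v
      by_cases h : w ∈ S v
      · have hv : v ∈ S w := (hswap v).1 h
        rw [if_pos h, if_pos hv]
        have hR1 : R w v := (hmem w v).1 hv
        rw [hgR hR1, hScongr hR1]
      · rw [if_neg h, if_neg (fun hv => h ((hswap v).2 hv))]
    rw [Finset.sum_congr rfl (fun v _ => h1 v)]
    rw [Finset.sum_ite_mem, Finset.univ_inter, Finset.sum_const]
    have : ((S w).card : ℝ) ≠ 0 := by
      exact_mod_cast (hcardpos w).ne'
    rw [nsmul_eq_mul]; field_simp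
  rw [hgeq]
  refine Submodule.sum_mem _ fun v _ => Submodule.smul_mem _ _ (Submodule.subset_span ?_)
  refine ⟨S v, ?_, rfl⟩
  intro e he
  by_contra hpe
  have hstep : rel (src e) (tgt e) := ⟨e, hpe, Or.inl ⟨rfl, rfl⟩⟩
  refine he ⟨fun h => ?_, fun h => ?_⟩
  · exact (hmem v _).2 (((hmem v _).1 h).trans (ReflTransGen.single hstep))
  · exact (hmem v _).2 (((hmem v _).1 h).trans (ReflTransGen.single (hsymm hstep)))


theorem stmt9 {E V F : Type*} [Fintype E] [Fintype V] [Fintype F]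
    [DecidableEq E] [DecidableEq V]
    (src tgt : E → V)
    (hconn : ∀ u v : V, Relation.ReflTransGen
      (fun a b => ∃ e : E, (src e = a ∧ tgt e = b) ∨ (src e = b ∧ tgt e = a)) u v)
    (A : Matrix E V ℝ)
    (hA : ∀ e v, A e v = (if tgt e = v then 1 else 0) - (if src e = v then 1 else 0))
    (B : Matrix F E ℝ)
    (hBA : B * A = 0)
    (hexact : ∀ x : E → ℝ, B.mulVec x = 0 ↔ ∃ y : V → ℝ, x = A.mulVec y)
    (C : Finset E)
    (P : Matrix E E ℝ)
    (hP : P = Matrix.diagonal (fun e => if e ∈ C then (1 : ℝ) else -1))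
    (M : Matrix F V ℝ)
    (hM : M = (1/2 : ℝ) • (B * P * A)) :
    ∀ φ : V → ℝ, M.mulVec φ = 0 ↔
      φ ∈ Submodule.span ℝ {x : V → ℝ | ∃ S : Finset V,
        ((∀ e : E, ¬(src e ∈ S ↔ tgt e ∈ S) → e ∈ C) ∨
         (∀ e : E, ¬(src e ∈ S ↔ tgt e ∈ S) → e ∉ C)) ∧
        x = fun v => if v ∈ S then (1 : ℝ) else 0} := by
  classical
  have hAmul : ∀ (y : V → ℝ) (e : E), A.mulVec y e = y (tgt e) - y (src e) := by
    intro y e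
    simp only [Matrix.mulVec, dotProduct, hA, sub_mul, ite_mul, one_mul, zero_mul]
    rw [Finset.sum_sub_distrib, Finset.sum_ite_eq, Finset.sum_ite_eq]
    simp
  have key : ∀ ψ : V → ℝ, M.mulVec ψ =
      B.mulVec (fun e => if e ∈ C then A.mulVec ψ e else 0) := by
    intro ψ
    have h1 : (fun e => if e ∈ C then A.mulVec ψ e else 0)
        = (1/2 : ℝ) • (P.mulVec (A.mulVec ψ) + A.mulVec ψ) := by
      funext e
      simp only [hP, Pi.smul_apply, Pi.add_apply, Matrix.mulVec_diagonal, smul_eq_mul]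
      split <;> ring
    rw [h1, Matrix.mulVec_smul, Matrix.mulVec_add, Matrix.mulVec_mulVec,
      Matrix.mulVec_mulVec, Matrix.mulVec_mulVec, hBA, Matrix.zero_mulVec,
      add_zero, hM, Matrix.smul_mulVec]
  intro φ
  constructor
  · -- forward direction
    intro hφ
    rw [key] at hφ
    obtain ⟨ψ, hψ⟩ := (hexact _).1 hφ
    have hψI : ∀ e, e ∉ C → ψ (src e) = ψ (tgt e) := by
      intro e he
      have : A.mulVec ψ e = 0 := by
        rw [← hψ]; simp [he]
      rw [hAmul] at this; linarith
    have hχC : ∀ e, e ∈ C → (φ - ψ) (src e) = (φ - ψ) (tgt e) := by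
      intro e he
      have h1 : A.mulVec ψ e = A.mulVec φ e := by
        rw [← hψ]; simp [he]
      rw [hAmul, hAmul] at h1
      simp only [Pi.sub_apply]; linarith
    have m1 := aux9 src tgt (· ∈ C) ψ hψI
    have m2 := aux9 src tgt (· ∉ C) (φ - ψ) (by simpa using hχC)
    have hsub1 : {x : V → ℝ | ∃ S : Finset V,
        (∀ e : E, ¬(src e ∈ S ↔ tgt e ∈ S) → e ∈ C) ∧
        x = fun v => if v ∈ S then (1 : ℝ) else 0} ⊆ {x : V → ℝ | ∃ S : Finset V,
        ((∀ e : E, ¬(src e ∈ S ↔ tgt e ∈ S) → e ∈ C) ∨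
         (∀ e : E, ¬(src e ∈ S ↔ tgt e ∈ S) → e ∉ C)) ∧
        x = fun v => if v ∈ S then (1 : ℝ) else 0} := by
      rintro x ⟨S, hS, rfl⟩; exact ⟨S, Or.inl hS, rfl⟩
    have hsub2 : {x : V → ℝ | ∃ S : Finset V,
        (∀ e : E, ¬(src e ∈ S ↔ tgt e ∈ S) → e ∉ C) ∧
        x = fun v => if v ∈ S then (1 : ℝ) else 0} ⊆ {x : V → ℝ | ∃ S : Finset V,
        ((∀ e : E, ¬(src e ∈ S ↔ tgt e ∈ S) → e ∈ C) ∨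
         (∀ e : E, ¬(src e ∈ S ↔ tgt e ∈ S) → e ∉ C)) ∧
        x = fun v => if v ∈ S then (1 : ℝ) else 0} := by
      rintro x ⟨S, hS, rfl⟩; exact ⟨S, Or.inr hS, rfl⟩
    have : φ = ψ + (φ - ψ) := by ring
    rw [this]
    exact Submodule.add_mem _ (Submodule.span_mono hsub1 m1)
      (Submodule.span_mono hsub2 m2)
  · -- reverse direction
    intro hφ
    have hker : Submodule.span ℝ {x : V → ℝ | ∃ S : Finset V,
        ((∀ e : E, ¬(src e ∈ S ↔ tgt e ∈ S) → e ∈ C) ∨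
         (∀ e : E, ¬(src e ∈ S ↔ tgt e ∈ S) → e ∉ C)) ∧
        x = fun v => if v ∈ S then (1 : ℝ) else 0} ≤ LinearMap.ker M.mulVecLin := by
      rw [Submodule.span_le]
      rintro x ⟨S, hS | hS, rfl⟩ <;>
        simp only [SetLike.mem_coe, LinearMap.mem_ker, Matrix.mulVecLin_apply] <;> rw [key]
      · have h0 : (fun e => if e ∈ C then
            A.mulVec (fun v => if v ∈ S then (1:ℝ) else 0) e else 0)
            = A.mulVec (fun v => if v ∈ S then (1:ℝ) else 0) := by
          funext e
          by_cases he : e ∈ C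
          · simp [he]
          · rw [if_neg he, hAmul]
            have hiff : src e ∈ S ↔ tgt e ∈ S := by
              by_contra h; exact he (hS e h)
            by_cases h : src e ∈ S
            · rw [if_pos h, if_pos (hiff.1 h), sub_self]
            · rw [if_neg h, if_neg (fun ht => h (hiff.2 ht)), sub_self]
        rw [h0, Matrix.mulVec_mulVec, hBA, Matrix.zero_mulVec]
      · have h0 : (fun e => if e ∈ C then
            A.mulVec (fun v => if v ∈ S then (1:ℝ) else 0) e else 0) = 0 := by
          funext e
          by_cases he : e ∈ C
          · rw [if_pos he, hAmul]
            have hiff : src e ∈ S ↔ tgt e ∈ S := by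
              by_contra h; exact hS e h he
            by_cases h : src e ∈ S
            · simp [if_pos h, if_pos (hiff.1 h)]
            · simp [if_neg h, if_neg (fun ht => h (hiff.2 ht))]
          · simp [he]
        rw [h0, Matrix.mulVec_zero]
    have := hker hφ
    simpa using this
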